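/- If ψ ∈ W, then Bψ(x) ≥ 0 for all x in [ε,∞), and the function Bψ is continuous on [ε,∞). -/

import Mathlib

open Real Set MeasureTheory

/-- The nonlinear integral operator `B`. -/
noncomputable def opB (lam ε : ℝ) (ψ : ℝ → ℝ) (x : ℝ) : ℝ :=
  (lam / 2) * Real.sqrt (x + ε) *
    ∫ y in Set.Ioi ε, (1 / (y + x + |y - x|)) * (y / Real.sqrt (y + ε)) *
      (ψ y / (y + (ψ y) ^ 2 / (y + ε)))

/-- Membership in `W`: bounded, continuous and nonnegative on `[ε,∞)`. -/
def memW (ε : ℝ) (ψ : ℝ → ℝ) : Prop :=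
  ContinuousOn ψ (Set.Ici ε) ∧ (∃ M : ℝ, ∀ x ∈ Set.Ici ε, |ψ x| ≤ M) ∧
    ∀ x ∈ Set.Ici ε, 0 ≤ ψ x

theorem stmt_14 (ε lam : ℝ) (hε : 0 < ε) (hlam0 : 0 < lam) (hlam1 : lam < 1)
    (ψ : ℝ → ℝ) (hψ : memW ε ψ) :
    (∀ x ∈ Set.Ici ε, 0 ≤ opB lam ε ψ x) ∧
      ContinuousOn (opB lam ε ψ) (Set.Ici ε) := by
  obtain ⟨hc, ⟨M, hM⟩, hpos⟩ := hψ
  have hM0 : 0 ≤ M := le_trans (abs_nonneg _) (hM ε (Set.mem_Ici.mpr le_rfl))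
  -- notation for the integrand
  set F : ℝ → ℝ → ℝ := fun x y =>
    (1 / (y + x + |y - x|)) * (y / Real.sqrt (y + ε)) *
      (ψ y / (y + (ψ y) ^ 2 / (y + ε))) with hF
  -- basic positivity facts for y ∈ Ioi ε and x ∈ Ici ε
  have hden3 : ∀ y ∈ Set.Ioi ε, (0:ℝ) < y + (ψ y) ^ 2 / (y + ε) := by
    intro y hy
    have hy0 : (0:ℝ) < y := lt_trans hε hy
    have : (0:ℝ) ≤ (ψ y) ^ 2 / (y + ε) :=
      div_nonneg (sq_nonneg _) (by linarith)
    linarith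
  constructor
  · -- nonnegativity
    intro x hx
    have hx0 : (0:ℝ) < x := lt_of_lt_of_le hε hx
    have hI : 0 ≤ ∫ y in Set.Ioi ε, F x y := by
      apply MeasureTheory.setIntegral_nonneg measurableSet_Ioi
      intro y hy
      have hy0 : (0:ℝ) < y := lt_trans hε hy
      have h1 : (0:ℝ) ≤ 1 / (y + x + |y - x|) := by
        apply div_nonneg zero_le_one
        have := abs_nonneg (y - x); linarith
      have h2 : (0:ℝ) ≤ y / Real.sqrt (y + ε) :=
        div_nonneg hy0.le (Real.sqrt_nonneg _)
      have h3 : (0:ℝ) ≤ ψ y / (y + (ψ y) ^ 2 / (y + ε)) :=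
        div_nonneg (hpos y (Set.mem_Ici.mpr (le_of_lt (Set.mem_Ioi.mp hy)))) (hden3 y hy).le
      exact mul_nonneg (mul_nonneg h1 h2) h3
    unfold opB
    have : (0:ℝ) ≤ (lam / 2) * Real.sqrt (x + ε) :=
      mul_nonneg (by linarith) (Real.sqrt_nonneg _)
    exact mul_nonneg this hI
  · -- continuity
    have hIcont : ContinuousOn (fun x => ∫ y in Set.Ioi ε, F x y) (Set.Ici ε) := by
      apply MeasureTheory.continuousOn_of_dominated
        (bound := fun y => M / (2 * (y * Real.sqrt y)))
      · -- a.e. strong measurability in y for each x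
        intro x hx
        have hx0 : (0:ℝ) < x := lt_of_lt_of_le hε hx
        apply ContinuousOn.aestronglyMeasurable _ measurableSet_Ioi
        apply ContinuousOn.mul
        · apply ContinuousOn.mul
          · apply ContinuousOn.div continuousOn_const
            · exact (((continuous_id.add continuous_const).add
                ((continuous_id.sub continuous_const).abs)).continuousOn)
            · intro y hy
              have hy0 : (0:ℝ) < y := lt_trans hε hy
              have := abs_nonneg (y - x)
              positivity
          · apply ContinuousOn.div continuousOn_id
            · exact (Real.continuous_sqrt.comp (continuous_id.add continuous_const)).continuousOn
            · intro y hy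
              have hy0 : (0:ℝ) < y := lt_trans hε hy
              have : (0:ℝ) < y + ε := by linarith
              exact ne_of_gt (Real.sqrt_pos.mpr this)
        · apply ContinuousOn.div
          · exact hc.mono (fun y hy => Set.mem_Ici.mpr (le_of_lt (Set.mem_Ioi.mp hy)))
          · apply ContinuousOn.add continuousOn_id
            apply ContinuousOn.div
            · exact ((hc.mono (fun y hy => Set.mem_Ici.mpr (le_of_lt (Set.mem_Ioi.mp hy)))).pow 2)
            · exact (continuous_id.add continuous_const).continuousOn
            · intro y hy
              have hy0 : (0:ℝ) < y := lt_trans hε hy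
              exact ne_of_gt (by linarith : (0:ℝ) < y + ε)
          · intro y hy
            exact ne_of_gt (hden3 y hy)
      · -- bound
        intro x hx
        have hx0 : (0:ℝ) < x := lt_of_lt_of_le hε hx
        filter_upwards [MeasureTheory.ae_restrict_mem measurableSet_Ioi] with y hy
        have hy0 : (0:ℝ) < y := lt_trans hε hy
        have hsy : (0:ℝ) < Real.sqrt y := Real.sqrt_pos.mpr hy0
        have h1pos : (0:ℝ) < y + x + |y - x| := by
          have := abs_nonneg (y - x); linarith
        have h1 : 1 / (y + x + |y - x|) ≤ 1 / (2 * y) := by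
          apply one_div_le_one_div_of_le (by linarith)
          have : y - x ≤ |y - x| := le_abs_self _
          linarith
        have h2 : y / Real.sqrt (y + ε) ≤ Real.sqrt y := by
          rw [div_le_iff₀ (Real.sqrt_pos.mpr (by linarith : (0:ℝ) < y + ε))]
          have h2a : Real.sqrt y * Real.sqrt y = y := Real.mul_self_sqrt hy0.le
          have h2b : Real.sqrt y ≤ Real.sqrt (y + ε) :=
            Real.sqrt_le_sqrt (by linarith)
          nlinarith [Real.sqrt_nonneg (y + ε)]
        have h3 : |ψ y / (y + (ψ y) ^ 2 / (y + ε))| ≤ M / y := by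
          rw [abs_div, abs_of_pos (hden3 y hy)]
          apply div_le_div₀ hM0 (hM y (Set.mem_Ici.mpr (le_of_lt (Set.mem_Ioi.mp hy)))) hy0
          have : (0:ℝ) ≤ (ψ y) ^ 2 / (y + ε) :=
            div_nonneg (sq_nonneg _) (by linarith)
          linarith
        have h1n : (0:ℝ) ≤ 1 / (y + x + |y - x|) := by positivity
        have h2n : (0:ℝ) ≤ y / Real.sqrt (y + ε) :=
          div_nonneg hy0.le (Real.sqrt_nonneg _)
        have key : ‖F x y‖ ≤ (1 / (2 * y)) * Real.sqrt y * (M / y) := by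
          rw [Real.norm_eq_abs, hF]
          simp only
          rw [abs_mul, abs_mul, abs_of_nonneg h1n, abs_of_nonneg h2n]
          have hA : (0:ℝ) ≤ 1 / (2 * y) := by positivity
          exact mul_le_mul (mul_le_mul h1 h2 h2n hA) h3 (abs_nonneg _)
            (mul_nonneg hA (Real.sqrt_nonneg _))
        refine key.trans (le_of_eq ?_)
        have hys : Real.sqrt y * Real.sqrt y = y := Real.mul_self_sqrt hy0.le
        field_simp
        linear_combination M * hys
      · -- integrability of the bound
        have h32 : IntegrableOn (fun y : ℝ => y ^ (-(3/2) : ℝ)) (Set.Ioi ε) :=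
          integrableOn_Ioi_rpow_of_lt (by norm_num) hε
        have : IntegrableOn (fun y : ℝ => M / 2 * y ^ (-(3/2) : ℝ)) (Set.Ioi ε) :=
          h32.const_mul _
        apply this.congr_fun _ measurableSet_Ioi
        intro y hy
        have hy0 : (0:ℝ) < y := lt_trans hε hy
        have h1 : y ^ ((3:ℝ)/2) = y * Real.sqrt y := by
          rw [show ((3:ℝ)/2) = 1 + 1/2 by norm_num, Real.rpow_add hy0,
            Real.rpow_one, ← Real.sqrt_eq_rpow]
        show M / 2 * y ^ (-(3/2) : ℝ) = M / (2 * (y * Real.sqrt y))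
        rw [show (-(3/2) : ℝ) = -((3:ℝ)/2) by norm_num, Real.rpow_neg hy0.le, h1]
        field_simp
      · -- continuity in x for a.e. y
        filter_upwards [MeasureTheory.ae_restrict_mem measurableSet_Ioi] with y hy
        have hy0 : (0:ℝ) < y := lt_trans hε hy
        apply ContinuousOn.mul _ continuousOn_const
        apply ContinuousOn.mul _ continuousOn_const
        apply ContinuousOn.div continuousOn_const
        · exact ((continuous_const.add continuous_id).add
            ((continuous_const.sub continuous_id).abs)).continuousOn
        · intro x hx
          have hx0 : (0:ℝ) < x := lt_of_lt_of_le hε hx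
          have := abs_nonneg (y - x)
          positivity
    unfold opB
    exact ((continuousOn_const.mul
      ((Real.continuous_sqrt.comp (continuous_id.add continuous_const)).continuousOn)).mul hIcont)
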